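/- For every pair of pure unit quaternions p and q, there exists a unit quaternion x such that the left p-fiber through x equals the right q-fiber through x, i.e., {(l + m·p)·x : l, m ∈ ℝ, l² + m² = 1} = {x·(l + m·q) : l, m ∈ ℝ, l² + m² = 1}. (For every pair p, q of pure unit quaternions there is a geodesic in S³ that is simultaneously a left p-fiber and a right q-fiber.) -/

import Mathlib

open Quaternion

private lemma pure_unit_mul_self {p : ℍ[ℝ]} (hre : p.re = 0) (hn : ‖p‖ = 1) :
    p * p = -1 := by
  have hstar : star p = -p := Quaternion.star_eq_neg.mpr hre
  have h1 : p * star p = Quaternion.normSq p := Quaternion.self_mul_star p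
  have h2 : Quaternion.normSq p = 1 := by
    rw [Quaternion.normSq_eq_norm_mul_self, hn]; ring
  rw [hstar, mul_neg, h2] at h1
  have h3 : -(p * p) = (1 : ℍ[ℝ]) := by exact_mod_cast h1
  rw [neg_eq_iff_eq_neg] at h3
  exact h3

private def qi : ℍ[ℝ] := ⟨0, 1, 0, 0⟩
private def qj : ℍ[ℝ] := ⟨0, 0, 1, 0⟩

private lemma qi_re : qi.re = 0 := rfl

private lemma norm_qi : ‖qi‖ = 1 := by
  have h := Quaternion.normSq_eq_norm_mul_self qi
  have h2 : Quaternion.normSq qi = 1 := by rw [Quaternion.normSq_def']; simp [qi]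
  nlinarith [norm_nonneg qi]

private lemma norm_qj : ‖qj‖ = 1 := by
  have h := Quaternion.normSq_eq_norm_mul_self qj
  have h2 : Quaternion.normSq qj = 1 := by rw [Quaternion.normSq_def']; simp [qj]
  nlinarith [norm_nonneg qj]

private lemma conjugate_to_i {p : ℍ[ℝ]} (hre : p.re = 0) (hn : ‖p‖ = 1) :
    ∃ x : ℍ[ℝ], ‖x‖ = 1 ∧ p * x = x * qi := by
  have hp2 : p * p = -1 := pure_unit_mul_self hre hn
  have hi2 : qi * qi = -1 := pure_unit_mul_self qi_re norm_qi
  by_cases hcase : p = -qi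
  · refine ⟨qj, norm_qj, ?_⟩
    subst hcase
    ext <;> simp [Quaternion.re_mul, Quaternion.imI_mul,
      Quaternion.imJ_mul, Quaternion.imK_mul] <;> simp [qi, qj]
  · set a : ℍ[ℝ] := 1 - p * qi with ha
    have hane : a ≠ 0 := by
      intro h0
      apply hcase
      have h1 : p * qi = 1 := (sub_eq_zero.mp h0).symm
      have h2 : p * qi * qi = qi := by rw [h1, one_mul]
      rw [mul_assoc, hi2, mul_neg, mul_one] at h2
      exact neg_eq_iff_eq_neg.mp h2
    have hmul : p * a = a * qi := by
      rw [ha, mul_sub, sub_mul, mul_one, one_mul, ← mul_assoc, hp2,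
        mul_assoc, hi2, neg_one_mul, mul_neg, mul_one, sub_neg_eq_add,
        sub_neg_eq_add, add_comm]
    have hna : ‖a‖ ≠ 0 := norm_ne_zero_iff.mpr hane
    refine ⟨‖a‖⁻¹ • a, ?_, ?_⟩
    · rw [norm_smul, norm_inv, norm_norm, inv_mul_cancel₀ hna]
    · rw [mul_smul_comm, smul_mul_assoc, hmul]

private lemma fiber_mul {p q x : ℍ[ℝ]} (hx : p * x = x * q) (l m : ℝ) :
    ((l : ℍ[ℝ]) + (m : ℍ[ℝ]) * p) * x = x * ((l : ℍ[ℝ]) + (m : ℍ[ℝ]) * q) := by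
  rw [add_mul, mul_add, Quaternion.coe_commutes, mul_assoc, hx, ← mul_assoc,
    Quaternion.coe_commutes, mul_assoc]

theorem exists_geodesic_left_p_fiber_eq_right_q_fiber
    (p q : ℍ[ℝ]) (hpre : p.re = 0) (hpnorm : ‖p‖ = 1)
    (hqre : q.re = 0) (hqnorm : ‖q‖ = 1) :
    ∃ x : ℍ[ℝ], ‖x‖ = 1 ∧
      {z : ℍ[ℝ] | ∃ l m : ℝ, l ^ 2 + m ^ 2 = 1 ∧
        z = ((l : ℍ[ℝ]) + (m : ℍ[ℝ]) * p) * x} =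
      {z : ℍ[ℝ] | ∃ l m : ℝ, l ^ 2 + m ^ 2 = 1 ∧
        z = x * ((l : ℍ[ℝ]) + (m : ℍ[ℝ]) * q)} := by
  obtain ⟨a, ha1, ha2⟩ := conjugate_to_i hpre hpnorm
  obtain ⟨b, hb1, hb2⟩ := conjugate_to_i hqre hqnorm
  have hq : star q = -q := Quaternion.star_eq_neg.mpr hqre
  have hi : star qi = -qi := Quaternion.star_eq_neg.mpr qi_re
  have key : qi * star b = star b * q := by
    have h := congrArg star hb2
    rw [star_mul, star_mul, hq, hi, mul_neg, neg_mul] at h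
    exact (neg_injective h).symm
  have hx : p * (a * star b) = (a * star b) * q := by
    rw [← mul_assoc, ha2, mul_assoc, key, mul_assoc]
  refine ⟨a * star b, by rw [norm_mul, norm_star, ha1, hb1]; ring, ?_⟩
  ext z
  constructor
  · rintro ⟨l, m, hlm, rfl⟩
    exact ⟨l, m, hlm, (fiber_mul hx l m)⟩
  · rintro ⟨l, m, hlm, rfl⟩
    exact ⟨l, m, hlm, (fiber_mul hx l m).symm⟩
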